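/- Let A : X → Y and B, C : Y → X satisfy A(BA)² = ABACA = ACABA = (AC)²A. For each n ≥ 1, define B_n = Σ_{k=1}^n (−1)^{k−1} C(n,k) B(AB)^{k−1} and C_n = Σ_{k=1}^n (−1)^{k−1} C(n,k) (CA)^{k−1}C. Then (I − AC)^n = I − AC_n, (I − BA)^n = I − B_nA, and A(B_nA)² = AB_nAC_nA = AC_nAB_nA = (AC_n)²A. -/

import Mathlib

open Polynomial ContinuousLinearMap

variable {X Y : Type*} [NormedAddCommGroup X] [NormedSpace ℂ X] [CompleteSpace X]
  [NormedAddCommGroup Y] [NormedSpace ℂ Y] [CompleteSpace Y]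

namespace Stmt13Aux

theorem binomAux (R : Type*) [Ring R] [Algebra ℂ R] (z : R) (n : ℕ) :
    (1 - z) ^ n = 1 - ∑ k ∈ Finset.Icc 1 n,
      (((-1 : ℂ) ^ (k - 1) * (n.choose k : ℂ)) • z ^ k) := by
  have hcomm : Commute (-z) (1 : R) := Commute.one_right _
  rw [sub_eq_neg_add, hcomm.add_pow n, Finset.sum_range_succ']
  have h0 : (-z) ^ 0 * 1 ^ (n - 0) * (n.choose 0 : R) = 1 := by simp
  rw [h0, ← Finset.Ico_add_one_right_eq_Icc, Finset.sum_Ico_eq_sum_range, Nat.add_sub_cancel,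
    add_comm, sub_eq_add_neg, ← Finset.sum_neg_distrib]
  congr 1
  refine Finset.sum_congr rfl fun k _ => ?_
  have h1 : (1 + k - 1 : ℕ) = k := by omega
  have h2 : (1 + k : ℕ) = k + 1 := by omega
  rw [h1, h2, mul_smul, Nat.cast_smul_eq_nsmul ℂ, nsmul_eq_mul,
    show ((-1:ℂ)^k • (((n.choose (k+1) : ℕ) : R) * z ^ (k+1))) =
      (-1:R)^k * (((n.choose (k+1) : ℕ) : R) * z ^ (k+1)) from by
        rw [Algebra.smul_def, map_pow, map_neg, map_one],
    one_pow, mul_one, neg_pow, (Nat.cast_commute (n.choose (k+1)) (z ^ (k+1))).eq]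
  noncomm_ring

lemma intertwine (A : X →L[ℂ] Y) (B : Y →L[ℂ] X) (k : ℕ) :
    ((A ∘L B) ^ k) ∘L A = A ∘L (B ∘L A) ^ k := by
  induction k with
  | zero => simp [ContinuousLinearMap.one_def]
  | succ k ih =>
    rw [pow_succ', pow_succ', mul_def, mul_def]
    exact congrArg (A ∘L B).comp ih

lemma step (A : X →L[ℂ] Y) (B : Y →L[ℂ] X) (x : Y →L[ℂ] Y)
    (hx : x ∘L ((A ∘L B) ∘L A) = (A ∘L B) ∘L ((A ∘L B) ∘L A)) (m : ℕ) (hm : 1 ≤ m) :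
    x ∘L (((A ∘L B) ^ m) ∘L A) = ((A ∘L B) ^ (m + 1)) ∘L A := by
  obtain ⟨j, rfl⟩ : ∃ j, m = j + 1 := ⟨m - 1, by omega⟩
  calc x ∘L (((A ∘L B) ^ (j + 1)) ∘L A)
      = x ∘L (((A ∘L B) ∘L ((A ∘L B) ^ j)) ∘L A) := by
        rw [pow_succ' (A ∘L B) j, mul_def]
    _ = x ∘L ((A ∘L B) ∘L (A ∘L ((B ∘L A) ^ j))) := by
        rw [show ((A ∘L B) ∘L ((A ∘L B) ^ j)) ∘L A = (A ∘L B) ∘L (((A ∘L B) ^ j) ∘L A) from rfl,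
          intertwine]
    _ = (x ∘L ((A ∘L B) ∘L A)) ∘L ((B ∘L A) ^ j) := rfl
    _ = ((A ∘L B) ∘L ((A ∘L B) ∘L A)) ∘L ((B ∘L A) ^ j) := by rw [hx]
    _ = (A ∘L B) ∘L ((A ∘L B) ∘L (A ∘L ((B ∘L A) ^ j))) := rfl
    _ = (A ∘L B) ∘L ((A ∘L B) ∘L (((A ∘L B) ^ j) ∘L A)) := by rw [intertwine]
    _ = ((A ∘L B) ^ (j + 1 + 1)) ∘L A := by
        rw [pow_succ' (A ∘L B) (j + 1), pow_succ' (A ∘L B) j, mul_def, mul_def]; rfl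

lemma steps (A : X →L[ℂ] Y) (B : Y →L[ℂ] X) (x : Y →L[ℂ] Y)
    (hx : x ∘L ((A ∘L B) ∘L A) = (A ∘L B) ∘L ((A ∘L B) ∘L A)) (j m : ℕ) (hm : 1 ≤ m) :
    (x ^ j) ∘L (((A ∘L B) ^ m) ∘L A) = ((A ∘L B) ^ (j + m)) ∘L A := by
  induction j with
  | zero => simp [ContinuousLinearMap.one_def]
  | succ j ih =>
    calc (x ^ (j + 1)) ∘L (((A ∘L B) ^ m) ∘L A)
        = x ∘L ((x ^ j) ∘L (((A ∘L B) ^ m) ∘L A)) := by rw [pow_succ' x j, mul_def]; rfl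
      _ = x ∘L (((A ∘L B) ^ (j + m)) ∘L A) := by rw [ih]
      _ = ((A ∘L B) ^ (j + m + 1)) ∘L A := step A B x hx (j + m) (by omega)
      _ = ((A ∘L B) ^ (j + 1 + m)) ∘L A := by rw [show j + m + 1 = j + 1 + m from by omega]

lemma vpow (A : X →L[ℂ] Y) (B : Y →L[ℂ] X) (y : Y →L[ℂ] Y)
    (hyu : y ∘L ((A ∘L B) ∘L A) = (A ∘L B) ∘L ((A ∘L B) ∘L A))
    (hyy : y ∘L (y ∘L A) = (A ∘L B) ∘L ((A ∘L B) ∘L A)) (k : ℕ) (hk : 2 ≤ k) :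
    (y ^ k) ∘L A = ((A ∘L B) ^ k) ∘L A := by
  induction k with
  | zero => omega
  | succ k ih =>
    rcases Nat.lt_or_ge k 2 with h | h
    · interval_cases k
      · omega
      · calc (y ^ 2) ∘L A = y ∘L (y ∘L A) := by rw [pow_two, mul_def]; rfl
          _ = (A ∘L B) ∘L ((A ∘L B) ∘L A) := hyy
          _ = ((A ∘L B) ^ 2) ∘L A := by rw [pow_two, mul_def]; rfl
    · calc (y ^ (k + 1)) ∘L A = y ∘L ((y ^ k) ∘L A) := by rw [pow_succ' y k, mul_def]; rfl
        _ = y ∘L (((A ∘L B) ^ k) ∘L A) := by rw [ih h]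
        _ = ((A ∘L B) ^ (k + 1)) ∘L A := step A B y hyu k (by omega)

lemma master (A : X →L[ℂ] Y) (B : Y →L[ℂ] X) (x y : Y →L[ℂ] Y)
    (hxu : x ∘L ((A ∘L B) ∘L A) = (A ∘L B) ∘L ((A ∘L B) ∘L A))
    (hyu : y ∘L ((A ∘L B) ∘L A) = (A ∘L B) ∘L ((A ∘L B) ∘L A))
    (hyy : y ∘L (y ∘L A) = (A ∘L B) ∘L ((A ∘L B) ∘L A))
    (hxy : x ∘L (y ∘L A) = (A ∘L B) ∘L ((A ∘L B) ∘L A))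
    (j k : ℕ) (hj : 1 ≤ j) (hk : 1 ≤ k) :
    (x ^ j) ∘L ((y ^ k) ∘L A) = ((A ∘L B) ^ (j + k)) ∘L A := by
  rcases Nat.lt_or_ge k 2 with h | h
  · interval_cases k
    obtain ⟨i, rfl⟩ : ∃ i, j = i + 1 := ⟨j - 1, by omega⟩
    calc (x ^ (i + 1)) ∘L ((y ^ 1) ∘L A)
        = (x ^ i) ∘L (x ∘L (y ∘L A)) := by rw [pow_succ x i, mul_def, pow_one]; rfl
      _ = (x ^ i) ∘L ((A ∘L B) ∘L ((A ∘L B) ∘L A)) := by rw [hxy]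
      _ = (x ^ i) ∘L (((A ∘L B) ^ 2) ∘L A) := by rw [pow_two, mul_def]; rfl
      _ = ((A ∘L B) ^ (i + 2)) ∘L A := steps A B x hxu i 2 (by omega)
      _ = ((A ∘L B) ^ (i + 1 + 1)) ∘L A := by rw [show i + 2 = i + 1 + 1 from rfl]
  · rw [vpow A B y hyu hyy k h, steps A B x hxu j k (by omega)]

lemma compsum (A : X →L[ℂ] Y) (B : Y →L[ℂ] X) (n : ℕ) (x y : Y →L[ℂ] Y) (c : ℕ → ℂ)
    (H : ∀ j k, 1 ≤ j → 1 ≤ k → (x ^ j) ∘L ((y ^ k) ∘L A) = ((A ∘L B) ^ (j + k)) ∘L A) :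
    (∑ j ∈ Finset.Icc 1 n, c j • x ^ j) ∘L ((∑ k ∈ Finset.Icc 1 n, c k • y ^ k) ∘L A)
      = ∑ j ∈ Finset.Icc 1 n, ∑ k ∈ Finset.Icc 1 n,
          (c j * c k) • (((A ∘L B) ^ (j + k)) ∘L A) := by
  simp only [ContinuousLinearMap.finset_sum_comp, ContinuousLinearMap.smul_comp,
    ContinuousLinearMap.comp_finset_sum, ContinuousLinearMap.comp_smul, Finset.smul_sum,
    smul_smul]
  refine Finset.sum_congr rfl fun j hj => Finset.sum_congr rfl fun k hk => ?_
  rw [H k j (Finset.mem_Icc.mp hk).1 (Finset.mem_Icc.mp hj).1, Nat.add_comm k j]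

end Stmt13Aux

theorem stmt13 (A : X →L[ℂ] Y) (B C : Y →L[ℂ] X)
    (h1 : A ∘L B ∘L A ∘L B ∘L A = A ∘L B ∘L A ∘L C ∘L A)
    (h2 : A ∘L B ∘L A ∘L C ∘L A = A ∘L C ∘L A ∘L B ∘L A)
    (h3 : A ∘L C ∘L A ∘L B ∘L A = A ∘L C ∘L A ∘L C ∘L A) (n : ℕ) (hn : 1 ≤ n) (Bn Cn : Y →L[ℂ] X)
    (hBn : Bn = ∑ k ∈ Finset.Icc 1 n,
      ((-1 : ℂ) ^ (k - 1) * (n.choose k : ℂ)) • (B ∘L (A ∘L B) ^ (k - 1)))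
    (hCn : Cn = ∑ k ∈ Finset.Icc 1 n,
      ((-1 : ℂ) ^ (k - 1) * (n.choose k : ℂ)) • (((C ∘L A) ^ (k - 1)).comp C)) :
    (1 - A ∘L C) ^ n = 1 - A ∘L Cn ∧
    (1 - B ∘L A) ^ n = 1 - Bn ∘L A ∧
    A ∘L Bn ∘L A ∘L Bn ∘L A = A ∘L Bn ∘L A ∘L Cn ∘L A ∧
    A ∘L Bn ∘L A ∘L Cn ∘L A = A ∘L Cn ∘L A ∘L Bn ∘L A ∧
    A ∘L Cn ∘L A ∘L Bn ∘L A = A ∘L Cn ∘L A ∘L Cn ∘L A := by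
  have huv : (A ∘L B) ∘L ((A ∘L C) ∘L A) = (A ∘L B) ∘L ((A ∘L B) ∘L A) := h1.symm
  have hvu : (A ∘L C) ∘L ((A ∘L B) ∘L A) = (A ∘L B) ∘L ((A ∘L B) ∘L A) := (h1.trans h2).symm
  have hvv : (A ∘L C) ∘L ((A ∘L C) ∘L A) = (A ∘L B) ∘L ((A ∘L B) ∘L A) :=
    (h1.trans (h2.trans h3)).symm
  have huu : (A ∘L B) ∘L ((A ∘L B) ∘L A) = (A ∘L B) ∘L ((A ∘L B) ∘L A) := rfl
  have key1 : ∀ m : ℕ, A ∘L (((C ∘L A) ^ m) ∘L C) = (A ∘L C) ^ (m + 1) := by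
    intro m
    induction m with
    | zero => simp [ContinuousLinearMap.one_def]
    | succ m ih =>
      calc A ∘L (((C ∘L A) ^ (m + 1)) ∘L C)
          = (A ∘L C) ∘L (A ∘L (((C ∘L A) ^ m) ∘L C)) := by
            rw [pow_succ' (C ∘L A) m, mul_def]; rfl
        _ = (A ∘L C) ∘L ((A ∘L C) ^ (m + 1)) := by rw [ih]
        _ = (A ∘L C) ^ (m + 1 + 1) := by rw [pow_succ' (A ∘L C) (m + 1), mul_def]
  have hACn : A ∘L Cn = ∑ k ∈ Finset.Icc 1 n,
      ((-1 : ℂ) ^ (k - 1) * (n.choose k : ℂ)) • (A ∘L C) ^ k := by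
    rw [hCn, comp_finset_sum]
    refine Finset.sum_congr rfl fun k hk => ?_
    obtain ⟨hk1, _⟩ := Finset.mem_Icc.mp hk
    rw [ContinuousLinearMap.comp_smul, key1 (k - 1), Nat.sub_add_cancel hk1]
  have key2 : ∀ m : ℕ, (B ∘L (A ∘L B) ^ m) ∘L A = (B ∘L A) ^ (m + 1) := by
    intro m
    calc (B ∘L (A ∘L B) ^ m) ∘L A = B ∘L (((A ∘L B) ^ m) ∘L A) := rfl
      _ = B ∘L (A ∘L ((B ∘L A) ^ m)) := by rw [Stmt13Aux.intertwine]
      _ = (B ∘L A) ^ (m + 1) := by rw [pow_succ' (B ∘L A) m, mul_def]; rfl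
  have hBnA : Bn ∘L A = ∑ k ∈ Finset.Icc 1 n,
      ((-1 : ℂ) ^ (k - 1) * (n.choose k : ℂ)) • (B ∘L A) ^ k := by
    rw [hBn, finset_sum_comp]
    refine Finset.sum_congr rfl fun k hk => ?_
    obtain ⟨hk1, _⟩ := Finset.mem_Icc.mp hk
    rw [ContinuousLinearMap.smul_comp, key2 (k - 1), Nat.sub_add_cancel hk1]
  have key3 : ∀ m : ℕ, A ∘L (B ∘L (A ∘L B) ^ m) = (A ∘L B) ^ (m + 1) := by
    intro m
    rw [pow_succ' (A ∘L B) m, mul_def]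
    rfl
  have hABn : A ∘L Bn = ∑ k ∈ Finset.Icc 1 n,
      ((-1 : ℂ) ^ (k - 1) * (n.choose k : ℂ)) • (A ∘L B) ^ k := by
    rw [hBn, comp_finset_sum]
    refine Finset.sum_congr rfl fun k hk => ?_
    obtain ⟨hk1, _⟩ := Finset.mem_Icc.mp hk
    rw [ContinuousLinearMap.comp_smul, key3 (k - 1), Nat.sub_add_cancel hk1]
  refine ⟨?_, ?_, ?_, ?_, ?_⟩
  · rw [Stmt13Aux.binomAux _ (A ∘L C) n, hACn]
  · rw [Stmt13Aux.binomAux _ (B ∘L A) n, hBnA]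
  · show (A ∘L Bn) ∘L ((A ∘L Bn) ∘L A) = (A ∘L Bn) ∘L ((A ∘L Cn) ∘L A)
    rw [hABn, hACn,
      Stmt13Aux.compsum A B n _ _ _ (Stmt13Aux.master A B _ _ huu huu huu huu),
      Stmt13Aux.compsum A B n _ _ _ (Stmt13Aux.master A B _ _ huu hvu hvv huv)]
  · show (A ∘L Bn) ∘L ((A ∘L Cn) ∘L A) = (A ∘L Cn) ∘L ((A ∘L Bn) ∘L A)
    rw [hABn, hACn,
      Stmt13Aux.compsum A B n _ _ _ (Stmt13Aux.master A B _ _ huu hvu hvv huv),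
      Stmt13Aux.compsum A B n _ _ _ (Stmt13Aux.master A B _ _ hvu huu huu hvu)]
  · show (A ∘L Cn) ∘L ((A ∘L Bn) ∘L A) = (A ∘L Cn) ∘L ((A ∘L Cn) ∘L A)
    rw [hABn, hACn,
      Stmt13Aux.compsum A B n _ _ _ (Stmt13Aux.master A B _ _ hvu huu huu hvu),
      Stmt13Aux.compsum A B n _ _ _ (Stmt13Aux.master A B _ _ hvu hvu hvv hvv)]
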